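/- arXiv:1405.4809 — 3 statements merged into one kernel-verified Lean document; each statement's English description precedes it below -/
import Mathlib

section
/- Let (X,d) be a metric space, let A ⊆ X, let f : A → ℝ be a 1-Lipschitz function, and let M : A ⇉ A be a multivalued mapping such that f(y) − f(x) = d(x,y) for all (x,y) ∈ G(M). Then for any nonempty S ⊆ dom(M), the restriction f|_S extends to a 1-Lipschitz function h : X → ℝ satisfying h(y) − h(x) = d(x,y) for all (x,y) ∈ G(M); moreover, among all such extensions there exist a pointwise minimal one and a pointwise maximal one. -/
noncomputable section

open scoped Classical

variable {X Y : Type*}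

/-- The `c`-transform of `f : X → EReal`, a function on `Y`:
`f^c(y) = sup_{x ∈ X} (c(x,y) - f(x))`. The `c`-transform of a function on `Y` is obtained
by applying this to the swapped coupling `fun y x => c x y`. -/
def cTransform (c : X → Y → ℝ) (f : X → EReal) : Y → EReal :=
  fun y => ⨆ x, ((c x y : EReal) - f x)

/-- `f` is proper: it takes no value `-∞` (i.e. maps into `(-∞, +∞]`) and is finite somewhere. -/
def ProperFn (f : X → EReal) : Prop :=
  (∀ x, f x ≠ ⊥) ∧ ∃ x, f x ≠ ⊤

/-- `f` is `c`-convex: it is proper and is the `c`-transform of some proper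
`g : Y → (-∞, +∞]`. -/
def IsCConvex (c : X → Y → ℝ) (f : X → EReal) : Prop :=
  ProperFn f ∧ ∃ g : Y → EReal, ProperFn g ∧ f = cTransform (fun y x => c x y) g

/-- The `c`-subdifferential of `f`:
`∂_c f(x) = { y | ∀ x', f(x) + c(x',y) ≤ f(x') + c(x,y) }`. -/
def cSubdiff (c : X → Y → ℝ) (f : X → EReal) (x : X) : Set Y :=
  { y | ∀ x', f x + (c x' y : EReal) ≤ f x' + (c x y : EReal) }

/-- The domain of a multivalued mapping `M : X ⇉ Y`. -/
def mapDom (M : X → Set Y) : Set X := { x | (M x).Nonempty }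

/-- The inverse multivalued mapping `M⁻¹ : Y ⇉ X`. -/
def mapInv (M : X → Set Y) : Y → Set X := fun y => { x | y ∈ M x }

/-- The image `M(S) = ⋃_{s ∈ S} M(s)` of a set `S` under a multivalued mapping. -/
def mapImageOn (M : X → Set Y) (S : Set X) : Set Y := { y | ∃ s ∈ S, y ∈ M s }

/-- The image `Im(M) = ⋃_{x ∈ X} M(x)` of a multivalued mapping. -/
def mapIm (M : X → Set Y) : Set Y := { y | ∃ x, y ∈ M x }

/-- `f` is a `c`-antiderivative of `M`: `f` is proper and `G(M) ⊆ G(∂_c f)`. -/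
def IsCAntiderivative (c : X → Y → ℝ) (f : X → EReal) (M : X → Set Y) : Prop :=
  ProperFn f ∧ ∀ x y, y ∈ M x → y ∈ cSubdiff c f x

/-- The family `𝒜_{[c, f|_S, M]}` of all `c`-convex `c`-antiderivatives of `M`
which coincide with `f` on `S`. -/
def cFamily (c : X → Y → ℝ) (f : X → EReal) (S : Set X) (M : X → Set Y) :
    Set (X → EReal) :=
  { h | IsCConvex c h ∧ (∀ x y, y ∈ M x → y ∈ cSubdiff c h x) ∧ ∀ s ∈ S, h s = f s }

/-- The upper envelope `γ_{[c, f|_S, M]}`. -/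
def upperEnv (c : X → Y → ℝ) (f : X → EReal) (S : Set X) (M : X → Set Y) : X → EReal :=
  fun x => ⨆ h ∈ cFamily c f S M, h x

/-- The lower envelope `α_{[c, f|_S, M]}`. -/
def lowerEnv (c : X → Y → ℝ) (f : X → EReal) (S : Set X) (M : X → Set Y) : X → EReal :=
  fun x => ⨅ h ∈ cFamily c f S M, h x

/-- The indicator function `ι_A` (0 on `A`, `+∞` off `A`). -/
def indicatorE (A : Set X) : X → EReal := fun x => if x ∈ A then 0 else ⊤

/-- Rockafellar's function `R_{[c,M,s]}`: the supremum over `n ≥ 1` and chains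
`x_1 = s`, `x_{n+1} = x`, `{(x_i, y_i)}_{i=1}^n ⊆ G(M)` of
`Σ_{i=1}^n [c(x_{i+1}, y_i) - c(x_i, y_i)]` (0-indexed below). -/
def rockafellar (c : X → Y → ℝ) (M : X → Set Y) (s : X) : X → EReal := fun x =>
  ⨆ (n : ℕ) (_ : 0 < n) (xs : ℕ → X) (ys : ℕ → Y)
      (_ : xs 0 = s ∧ ∀ i < n, ys i ∈ M (xs i)),
    (((∑ i ∈ Finset.range n,
        (c (if i + 1 < n then xs (i + 1) else x) (ys i) - c (xs i) (ys i))) : ℝ) : EReal)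

/-- `M` is cyclically monotone of order `n` with respect to `c`: for any `n` pairs
`{(x_i, y_i)}_{i=1}^n ⊆ G(M)`, setting `x_{n+1} = x_1`,
`0 ≤ Σ_{i=1}^n [c(x_i,y_i) - c(x_{i+1},y_i)]` (0-indexed below, cyclically). -/
def IsNCMonotone (c : X → Y → ℝ) (M : X → Set Y) (n : ℕ) : Prop :=
  ∀ (xs : ℕ → X) (ys : ℕ → Y), (∀ i < n, ys i ∈ M (xs i)) →
    0 ≤ ∑ i ∈ Finset.range n, (c (xs i) (ys i) - c (xs ((i + 1) % n)) (ys i))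

/-- `M` is `c`-cyclically monotone: `n`-`c`-monotone for all `n`. -/
def IsCCyclicallyMonotone (c : X → Y → ℝ) (M : X → Set Y) : Prop :=
  ∀ n : ℕ, IsNCMonotone c M n

/-- The set of 1-Lipschitz extensions `h : X → ℝ` of `f|_S` which preserve the
distances prescribed by `M`, i.e. `h(y) - h(x) = d(x,y)` for all `(x,y) ∈ G(M)`. -/
def lipExtFamily {X : Type*} [MetricSpace X] (A : Set X) (f : A → ℝ)
    (M : A → Set A) (S : Set A) : Set (X → ℝ) :=
  { h | (∀ x y : X, |h x - h y| ≤ dist x y) ∧ (∀ s : A, s ∈ S → h s = f s) ∧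
      ∀ x y : A, y ∈ M x → h y - h x = dist (x : X) (y : X) }

/-- if `f : A → ℝ` is 1-Lipschitz, `M : A ⇉ A` satisfies
`f(y) - f(x) = d(x,y)` on `G(M)`, and `∅ ≠ S ⊆ dom M`, then `f|_S` extends to a
1-Lipschitz `h : X → ℝ` with `h(y) - h(x) = d(x,y)` on `G(M)`; moreover there exist a
pointwise minimal and a pointwise maximal such extension. -/
theorem statement17 {X : Type*} [MetricSpace X] (A : Set X) (f : A → ℝ)
    (hf : ∀ x y : A, |f x - f y| ≤ dist (x : X) (y : X))
    (M : A → Set A)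
    (hM : ∀ x y : A, y ∈ M x → f y - f x = dist (x : X) (y : X))
    (S : Set A) (hS : S.Nonempty) (hSdom : S ⊆ mapDom M) :
    (lipExtFamily A f M S).Nonempty ∧
      (∃ hmin ∈ lipExtFamily A f M S,
        ∀ h ∈ lipExtFamily A f M S, ∀ x, hmin x ≤ h x) ∧
      ∃ hmax ∈ lipExtFamily A f M S,
        ∀ h ∈ lipExtFamily A f M S, ∀ x, h x ≤ hmax x := by
  classical
  obtain ⟨s0, hs0⟩ := hS
  haveI : Nonempty A := ⟨s0⟩
  -- The McShane extension F of f to X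
  set F : X → ℝ := fun x => ⨅ a : A, (f a + dist x (a : X)) with hFdef
  have hbdd : ∀ x : X, BddBelow (Set.range fun a : A => f a + dist x (a : X)) := by
    intro x
    refine ⟨f s0 - dist x (s0 : X), ?_⟩
    rintro r ⟨a, rfl⟩
    have h1 : f s0 - f a ≤ dist (s0 : X) (a : X) := (abs_le.1 (hf s0 a)).2
    have h2 := dist_triangle (s0 : X) x (a : X)
    have h3 : dist (s0 : X) x = dist x (s0 : X) := dist_comm _ _
    dsimp only
    linarith
  have hFle : ∀ (x : X) (a : A), F x ≤ f a + dist x (a : X) := fun x a =>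
    ciInf_le (hbdd x) a
  have hFA : ∀ b : A, F (b : X) = f b := by
    intro b
    have h1 : F (b : X) ≤ f b := by
      have := hFle (b : X) b
      simpa using this
    have h2 : f b ≤ F (b : X) := by
      refine le_ciInf fun a => ?_
      have := (abs_le.1 (hf b a)).2
      linarith
    linarith
  have hFlip : ∀ x y : X, |F x - F y| ≤ dist x y := by
    have key : ∀ x y : X, F x - F y ≤ dist x y := by
      intro x y
      have h1 : F x - dist x y ≤ F y := by
        refine le_ciInf fun a => ?_
        have h2 := hFle x a
        have h3 := dist_triangle x y (a : X)
        linarith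
      linarith
    intro x y
    rw [abs_sub_le_iff]
    exact ⟨key x y, by have := key y x; rw [dist_comm]; linarith⟩
  have hFmem : F ∈ lipExtFamily A f M S := by
    refine ⟨hFlip, fun s _ => hFA s, fun x y hy => ?_⟩
    rw [hFA x, hFA y]
    exact hM x y hy
  -- pointwise bounds for members of the family
  have hub : ∀ h ∈ lipExtFamily A f M S, ∀ x, h x ≤ f s0 + dist x (s0 : X) := by
    intro h hh x
    have h1 := (abs_le.1 (hh.1 x (s0 : X))).2
    have h2 := hh.2.1 s0 hs0
    linarith
  have hlb : ∀ h ∈ lipExtFamily A f M S, ∀ x, f s0 - dist x (s0 : X) ≤ h x := by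
    intro h hh x
    have h1 := (abs_le.1 (hh.1 x (s0 : X))).1
    have h2 := hh.2.1 s0 hs0
    linarith
  have hne : ∀ x : X, ((fun h : X → ℝ => h x) '' lipExtFamily A f M S).Nonempty :=
    fun x => ⟨F x, F, hFmem, rfl⟩
  have hba : ∀ x : X, BddAbove ((fun h : X → ℝ => h x) '' lipExtFamily A f M S) := by
    intro x
    refine ⟨f s0 + dist x (s0 : X), ?_⟩
    rintro r ⟨h, hh, rfl⟩
    exact hub h hh x
  have hbb : ∀ x : X, BddBelow ((fun h : X → ℝ => h x) '' lipExtFamily A f M S) := by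
    intro x
    refine ⟨f s0 - dist x (s0 : X), ?_⟩
    rintro r ⟨h, hh, rfl⟩
    exact hlb h hh x
  set G : X → ℝ := fun x => sSup ((fun h : X → ℝ => h x) '' lipExtFamily A f M S)
    with hGdef
  set L : X → ℝ := fun x => sInf ((fun h : X → ℝ => h x) '' lipExtFamily A f M S)
    with hLdef
  have hGle : ∀ h ∈ lipExtFamily A f M S, ∀ x, h x ≤ G x := fun h hh x =>
    le_csSup (hba x) ⟨h, hh, rfl⟩
  have hLle : ∀ h ∈ lipExtFamily A f M S, ∀ x, L x ≤ h x := fun h hh x =>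
    csInf_le (hbb x) ⟨h, hh, rfl⟩
  have hGkey : ∀ x y : X, G x - G y ≤ dist x y := by
    intro x y
    have : G x ≤ G y + dist x y := by
      refine csSup_le (hne x) ?_
      rintro r ⟨h, hh, rfl⟩
      have h1 := (abs_le.1 (hh.1 x y)).2
      have h2 := hGle h hh y
      linarith
    linarith
  have hLkey : ∀ x y : X, L x - L y ≤ dist x y := by
    intro x y
    have : L y ≥ L x - dist x y := by
      refine le_csInf (hne y) ?_
      rintro r ⟨h, hh, rfl⟩
      have h1 := (abs_le.1 (hh.1 x y)).2
      have h2 := hLle h hh x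
      linarith
    linarith
  have hGmem : G ∈ lipExtFamily A f M S := by
    refine ⟨?_, ?_, ?_⟩
    · intro x y
      rw [abs_sub_le_iff]
      exact ⟨hGkey x y, by have := hGkey y x; rw [dist_comm]; linarith⟩
    · intro s hsS
      have h1 : G (s : X) ≤ f s := by
        refine csSup_le (hne _) ?_
        rintro r ⟨h, hh, rfl⟩
        exact le_of_eq (hh.2.1 s hsS)
      have h2 : f s ≤ G (s : X) := by
        have := hGle F hFmem (s : X)
        rw [hFA s] at this
        exact this
      linarith
    · intro x y hy
      have hle : G (y : X) - G (x : X) ≤ dist (x : X) (y : X) := by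
        have := hGkey (y : X) (x : X)
        rw [dist_comm] at this
        linarith
      have hge : G (x : X) ≤ G (y : X) - dist (x : X) (y : X) := by
        refine csSup_le (hne _) ?_
        rintro r ⟨h, hh, rfl⟩
        have h1 := hh.2.2 x y hy
        have h2 := hGle h hh (y : X)
        linarith
      linarith
  have hLmem : L ∈ lipExtFamily A f M S := by
    refine ⟨?_, ?_, ?_⟩
    · intro x y
      rw [abs_sub_le_iff]
      exact ⟨hLkey x y, by have := hLkey y x; rw [dist_comm]; linarith⟩
    · intro s hsS
      have h1 : f s ≤ L (s : X) := by
        refine le_csInf (hne _) ?_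
        rintro r ⟨h, hh, rfl⟩
        exact ge_of_eq (hh.2.1 s hsS)
      have h2 : L (s : X) ≤ f s := by
        have := hLle F hFmem (s : X)
        rw [hFA s] at this
        exact this
      linarith
    · intro x y hy
      have hle : L (y : X) - L (x : X) ≤ dist (x : X) (y : X) := by
        have := hLkey (y : X) (x : X)
        rw [dist_comm] at this
        linarith
      have hge : dist (x : X) (y : X) ≤ L (y : X) - L (x : X) := by
        have : L (x : X) + dist (x : X) (y : X) ≤ L (y : X) := by
          refine le_csInf (hne _) ?_
          rintro r ⟨h, hh, rfl⟩
          have h1 := hh.2.2 x y hy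
          have h2 := hLle h hh (x : X)
          linarith
        linarith
      linarith
  exact ⟨⟨F, hFmem⟩, ⟨L, hLmem, fun h hh x => hLle h hh x⟩,
    ⟨G, hGmem, fun h hh x => hGle h hh x⟩⟩
end
end

section
/- Let (X,d) be a metric space, let M be a multivalued mapping with dom(M) ⊆ X and values in X, and let f : dom(M) → ℝ satisfy f(x) − f(x') ≤ d(x',y) − d(x,y) for all (x,y) ∈ G(M) and all x' ∈ dom(M). Let S be a nonempty subset of dom(M). Then the function α : X → ℝ defined by α(x) = sup over s ∈ S, n ∈ ℕ, chains x_1 = s with {(x_i,y_i)}_{i=1}^n ⊆ G(M), of f(s) + Σ_{i=1}^{n−1} [ d(x_i,y_i) − d(x_{i+1},y_i) ] + d(x_n,y_n) − d(x,y_n), is the pointwise minimal 1-Lipschitz function h : X → ℝ which agrees with f on S and satisfies h(x) − h(x') ≤ d(x',y) − d(x,y) for all (x,y) ∈ G(M) and all x' ∈ X. -/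
noncomputable section

open scoped Classical

variable {X Y : Type*}

/-- The family of 1-Lipschitz `h : X → ℝ` which agree with `f` on `S` and satisfy
`h(x) - h(x') ≤ d(x',y) - d(x,y)` for all `(x,y) ∈ G(M)` and all `x' ∈ X`. -/
def constrainedLipFamily {X : Type*} [MetricSpace X] (M : X → Set X) (f : X → ℝ)
    (S : Set X) : Set (X → ℝ) :=
  { h | (∀ x y, |h x - h y| ≤ dist x y) ∧ (∀ s ∈ S, h s = f s) ∧
      ∀ x y, y ∈ M x → ∀ x' : X, h x - h x' ≤ dist x' y - dist x y }

/-- The set of chain values defining `α_{[-d, f|_S, M]}(x)`: over `s ∈ S`, `n ≥ 1` and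
chains `x_1 = s`, `{(x_i,y_i)}_{i=1}^n ⊆ G(M)`, the value
`f(s) + Σ_{i=1}^{n-1} [d(x_i,y_i) - d(x_{i+1},y_i)] + d(x_n,y_n) - d(x,y_n)`
(0-indexed below). -/
def alphaChainSet {X : Type*} [MetricSpace X] (M : X → Set X) (f : X → ℝ)
    (S : Set X) (x : X) : Set ℝ :=
  { r | ∃ (n : ℕ) (xs ys : ℕ → X), 0 < n ∧ xs 0 ∈ S ∧ (∀ i < n, ys i ∈ M (xs i)) ∧
      r = f (xs 0) +
          (∑ i ∈ Finset.range (n - 1), (dist (xs i) (ys i) - dist (xs (i + 1)) (ys i))) +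
          dist (xs (n - 1)) (ys (n - 1)) - dist x (ys (n - 1)) }

section Aux

variable {X : Type*} [MetricSpace X]

/-- Telescoping via `f`. -/
lemma teleF (M : X → Set X) (f : X → ℝ)
    (hf : ∀ x y, y ∈ M x → ∀ x' ∈ mapDom M, f x - f x' ≤ dist x' y - dist x y)
    (xs ys : ℕ → X) :
    ∀ k, (∀ i ≤ k, ys i ∈ M (xs i)) →
      f (xs 0) + ∑ i ∈ Finset.range k, (dist (xs i) (ys i) - dist (xs (i + 1)) (ys i))
        ≤ f (xs k) := by
  intro k
  induction k with
  | zero => simp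
  | succ k ih =>
    intro h
    have h1 := ih (fun i hi => h i (hi.trans (Nat.le_succ k)))
    have h2 := hf (xs k) (ys k) (h k (Nat.le_succ k)) (xs (k + 1))
      ⟨ys (k + 1), h (k + 1) le_rfl⟩
    rw [Finset.sum_range_succ]
    linarith

/-- Every chain value is bounded by `f x' + dist x' x` for `x' ∈ dom M`. -/
lemma chainVal_le (M : X → Set X) (f : X → ℝ)
    (hf : ∀ x y, y ∈ M x → ∀ x' ∈ mapDom M, f x - f x' ≤ dist x' y - dist x y)
    (S : Set X) (x : X) (r : ℝ) (hr : r ∈ alphaChainSet M f S x)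
    (x' : X) (hx' : x' ∈ mapDom M) : r ≤ f x' + dist x' x := by
  obtain ⟨n, xs, ys, hn, _, hG, rfl⟩ := hr
  have h1 := teleF M f hf xs ys (n - 1) (fun i hi => hG i (by omega))
  have h2 := hf (xs (n - 1)) (ys (n - 1)) (hG (n - 1) (by omega)) x' hx'
  have h3 : dist x' (ys (n - 1)) ≤ dist x' x + dist x (ys (n - 1)) := dist_triangle _ _ _
  linarith

/-- Telescoping via a member of the constrained family. -/
lemma teleH (M : X → Set X) (f : X → ℝ) (S : Set X) (h : X → ℝ)
    (hh : h ∈ constrainedLipFamily M f S)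
    (xs ys : ℕ → X) (h0 : xs 0 ∈ S) :
    ∀ k, (∀ i ≤ k, ys i ∈ M (xs i)) →
      f (xs 0) + ∑ i ∈ Finset.range k, (dist (xs i) (ys i) - dist (xs (i + 1)) (ys i))
        ≤ h (xs k) := by
  intro k
  induction k with
  | zero => simp [hh.2.1 _ h0]
  | succ k ih =>
    intro hk
    have h1 := ih (fun i hi => hk i (hi.trans (Nat.le_succ k)))
    have h2 := hh.2.2 (xs k) (ys k) (hk k (Nat.le_succ k)) (xs (k + 1))
    rw [Finset.sum_range_succ]
    linarith

lemma chainVal_le_mem (M : X → Set X) (f : X → ℝ) (S : Set X) (h : X → ℝ)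
    (hh : h ∈ constrainedLipFamily M f S) (x : X) (r : ℝ)
    (hr : r ∈ alphaChainSet M f S x) : r ≤ h x := by
  obtain ⟨n, xs, ys, hn, h0, hG, rfl⟩ := hr
  have h1 := teleH M f S h hh xs ys h0 (n - 1) (fun i hi => hG i (by omega))
  have h2 := hh.2.2 (xs (n - 1)) (ys (n - 1)) (hG (n - 1) (by omega)) x
  linarith

/-- Extension of a chain by one link. -/
lemma chainVal_extend (M : X → Set X) (f : X → ℝ) (S : Set X) (x y x' : X)
    (hy : y ∈ M x) (r : ℝ) (hr : r ∈ alphaChainSet M f S x) :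
    r + dist x y - dist x' y ∈ alphaChainSet M f S x' := by
  obtain ⟨n, xs, ys, hn, h0, hG, rfl⟩ := hr
  obtain ⟨m, rfl⟩ : ∃ m, n = m + 1 := ⟨n - 1, by omega⟩
  refine ⟨m + 2, (fun i => if i < m + 1 then xs i else x),
    (fun i => if i < m + 1 then ys i else y), by omega, by simpa using h0, ?_, ?_⟩
  · intro i hi
    by_cases hcase : i < m + 1
    · simpa [hcase] using hG i hcase
    · simp [hcase, hy]
  · have hsum : ∑ i ∈ Finset.range (m + 2 - 1),
        (dist (if i < m + 1 then xs i else x) (if i < m + 1 then ys i else y) -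
          dist (if i + 1 < m + 1 then xs (i + 1) else x) (if i < m + 1 then ys i else y))
        = (∑ i ∈ Finset.range m, (dist (xs i) (ys i) - dist (xs (i + 1)) (ys i)))
          + (dist (xs m) (ys m) - dist x (ys m)) := by
      have : m + 2 - 1 = m + 1 := by omega
      rw [this, Finset.sum_range_succ]
      congr 1
      · refine Finset.sum_congr rfl (fun i hi => ?_)
        have hi' : i < m := Finset.mem_range.mp hi
        simp [Nat.lt_succ_of_lt hi', Nat.succ_lt_succ hi']
      · simp [Nat.lt_succ_self, lt_irrefl]
    rw [hsum]
    beta_reduce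
    simp only [show m + 2 - 1 = m + 1 from rfl, show m + 1 - 1 = m from rfl,
      if_neg (lt_irrefl (m + 1)), if_pos (Nat.succ_pos m)]
    ring

end Aux

/-- under the hypotheses on `f` and `M`, the function
`α(x) = sup alphaChainSet M f S x` is a well-defined real-valued function and is the
pointwise minimal 1-Lipschitz function agreeing with `f` on `S` and satisfying
`h(x) - h(x') ≤ d(x',y) - d(x,y)` for all `(x,y) ∈ G(M)`, `x' ∈ X`. -/
theorem statement18 {X : Type*} [MetricSpace X] (M : X → Set X) (f : X → ℝ)
    (hf : ∀ x y, y ∈ M x → ∀ x' ∈ mapDom M, f x - f x' ≤ dist x' y - dist x y)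
    (S : Set X) (hS : S.Nonempty) (hSdom : S ⊆ mapDom M) :
    (∀ x, (alphaChainSet M f S x).Nonempty ∧ BddAbove (alphaChainSet M f S x)) ∧
      (fun x => sSup (alphaChainSet M f S x)) ∈ constrainedLipFamily M f S ∧
      ∀ h ∈ constrainedLipFamily M f S, ∀ x, sSup (alphaChainSet M f S x) ≤ h x := by
  obtain ⟨s₀, hs₀⟩ := hS
  obtain ⟨y₀, hy₀⟩ := hSdom hs₀
  have hne : ∀ x : X, (alphaChainSet M f S x).Nonempty := by
    intro x
    exact ⟨f s₀ + 0 + dist s₀ y₀ - dist x y₀, 1, fun _ => s₀, fun _ => y₀, one_pos, hs₀,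
      fun i _ => hy₀, by simp⟩
  have hbdd : ∀ x : X, BddAbove (alphaChainSet M f S x) := by
    intro x
    exact ⟨f s₀ + dist s₀ x, fun r hr => chainVal_le M f hf S x r hr s₀ (hSdom hs₀)⟩
  set α : X → ℝ := fun x => sSup (alphaChainSet M f S x) with hα
  have hkey : ∀ x y x' : X, y ∈ M x → α x - α x' ≤ dist x' y - dist x y := by
    intro x y x' hy
    have : α x ≤ α x' + dist x' y - dist x y := by
      refine csSup_le (hne x) (fun r hr => ?_)
      have := le_csSup (hbdd x') (chainVal_extend M f S x y x' hy r hr)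
      linarith
    linarith
  have hlip : ∀ a b : X, α a ≤ α b + dist a b := by
    intro a b
    refine csSup_le (hne a) (fun r hr => ?_)
    obtain ⟨n, xs, ys, hn, h0, hG, rfl⟩ := hr
    have hmem : f (xs 0) +
        (∑ i ∈ Finset.range (n - 1), (dist (xs i) (ys i) - dist (xs (i + 1)) (ys i))) +
        dist (xs (n - 1)) (ys (n - 1)) - dist b (ys (n - 1)) ∈ alphaChainSet M f S b :=
      ⟨n, xs, ys, hn, h0, hG, rfl⟩
    have h1 := le_csSup (hbdd b) hmem
    have h2 : dist b (ys (n - 1)) ≤ dist b a + dist a (ys (n - 1)) := dist_triangle _ _ _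
    rw [dist_comm a b]
    linarith
  refine ⟨fun x => ⟨hne x, hbdd x⟩, ⟨?_, ?_, fun x y hy x' => hkey x y x' hy⟩, ?_⟩
  · intro a b
    rw [abs_sub_le_iff]
    constructor
    · have := hlip a b; linarith
    · have := hlip b a; rw [dist_comm b a] at this; linarith
  · intro s hs
    refine le_antisymm (csSup_le (hne s) (fun r hr => ?_)) (le_csSup (hbdd s) ?_)
    · have := chainVal_le M f hf S s r hr s (hSdom hs)
      simpa using this
    · obtain ⟨ys', hys'⟩ := hSdom hs
      exact ⟨1, fun _ => s, fun _ => ys', one_pos, hs, fun i _ => hys', by simp⟩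
  · intro h hh x
    exact csSup_le (hne x) (fun r hr => chainVal_le_mem M f S h hh x r hr)
end
end

section
/- Let (X,d) be a metric space, let M be a multivalued mapping with dom(M) ⊆ X and values in X, and let f : dom(M) → ℝ satisfy f(x) − f(x') ≤ d(x',y) − d(x,y) for all (x,y) ∈ G(M) and all x' ∈ dom(M). Let S be a nonempty subset of dom(M). Then the function γ : X → ℝ defined by γ(x) = inf over s ∈ S, n ∈ ℕ, chains x_1 = s with {(x_i,y_i)}_{i=1}^n ⊆ G(M), of f(s) + Σ_{i=1}^{n−1} [ d(x_i,y_{i+1}) − d(x_{i+1},y_{i+1}) ] + d(x_n,x), is the pointwise maximal 1-Lipschitz function h : X → ℝ which agrees with f on S and satisfies h(x) − h(x') ≤ d(x',y) − d(x,y) for all (x,y) ∈ G(M) and all x' ∈ X. -/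
noncomputable section

open scoped Classical

variable {X Y : Type*}

/-- The set of chain values defining `γ_{[-d, f|_S, M]}(x)`: over `s ∈ S`, `n ≥ 1` and
chains `x_1 = s`, `{(x_i,y_i)}_{i=1}^n ⊆ G(M)`, the value
`f(s) + Σ_{i=1}^{n-1} [d(x_i,y_{i+1}) - d(x_{i+1},y_{i+1})] + d(x_n,x)`
(0-indexed below). -/
def gammaChainSet {X : Type*} [MetricSpace X] (M : X → Set X) (f : X → ℝ)
    (S : Set X) (x : X) : Set ℝ :=
  { r | ∃ (n : ℕ) (xs ys : ℕ → X), 0 < n ∧ xs 0 ∈ S ∧ (∀ i < n, ys i ∈ M (xs i)) ∧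
      r = f (xs 0) +
          (∑ i ∈ Finset.range (n - 1),
            (dist (xs i) (ys (i + 1)) - dist (xs (i + 1)) (ys (i + 1)))) +
          dist (xs (n - 1)) x }

/-- under the hypotheses on `f` and `M`, the function
`γ(x) = inf gammaChainSet M f S x` is a well-defined real-valued function and is the
pointwise maximal 1-Lipschitz function agreeing with `f` on `S` and satisfying
`h(x) - h(x') ≤ d(x',y) - d(x,y)` for all `(x,y) ∈ G(M)`, `x' ∈ X`. -/
theorem statement19 {X : Type*} [MetricSpace X] (M : X → Set X) (f : X → ℝ)
    (hf : ∀ x y, y ∈ M x → ∀ x' ∈ mapDom M, f x - f x' ≤ dist x' y - dist x y)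
    (S : Set X) (hS : S.Nonempty) (hSdom : S ⊆ mapDom M) :
    (∀ x, (gammaChainSet M f S x).Nonempty ∧ BddBelow (gammaChainSet M f S x)) ∧
      (fun x => sInf (gammaChainSet M f S x)) ∈ constrainedLipFamily M f S ∧
      ∀ h ∈ constrainedLipFamily M f S, ∀ x, h x ≤ sInf (gammaChainSet M f S x) := by
  obtain ⟨s0, hs0S⟩ := hS
  obtain ⟨y0, hy0⟩ := hSdom hs0S
  -- key: any chain value is bounded below by f z + dist z x for the last point z ∈ dom M
  have key : ∀ (x : X) (r : ℝ), r ∈ gammaChainSet M f S x →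
      ∃ z ∈ mapDom M, f z + dist z x ≤ r := by
    rintro x r ⟨n, xs, ys, hn, hxs0, hys, rfl⟩
    obtain ⟨m, rfl⟩ : ∃ m, n = m + 1 := ⟨n - 1, (Nat.succ_pred_eq_of_pos hn).symm⟩
    refine ⟨xs m, ⟨ys m, hys m (by omega)⟩, ?_⟩
    have hterm : ∀ i ∈ Finset.range m,
        f (xs (i + 1)) - f (xs i) ≤
          dist (xs i) (ys (i + 1)) - dist (xs (i + 1)) (ys (i + 1)) := by
      intro i hi
      rw [Finset.mem_range] at hi
      exact hf (xs (i + 1)) (ys (i + 1)) (hys (i + 1) (by omega)) (xs i)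
        ⟨ys i, hys i (by omega)⟩
    have hsum := Finset.sum_le_sum hterm
    rw [Finset.sum_range_sub (fun i => f (xs i))] at hsum
    simp only [Nat.add_sub_cancel]
    linarith
  have hne : ∀ x, (gammaChainSet M f S x).Nonempty := by
    intro x
    exact ⟨f s0 + dist s0 x, 1, (fun _ => s0), (fun _ => y0), one_pos, hs0S,
      fun i _ => hy0, by simp⟩
  have hbdd : ∀ x, BddBelow (gammaChainSet M f S x) := by
    intro x
    refine ⟨f s0 + dist s0 y0 - dist x y0, fun r hr => ?_⟩
    obtain ⟨z, hz, hzr⟩ := key x r hr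
    have h1 : f s0 - f z ≤ dist z y0 - dist s0 y0 := hf s0 y0 hy0 z hz
    have h2 : dist z y0 ≤ dist z x + dist x y0 := dist_triangle _ _ _
    linarith
  -- translate a chain at y to a chain at x
  have trans : ∀ (x y : X) (r : ℝ), r ∈ gammaChainSet M f S y →
      ∃ r' ∈ gammaChainSet M f S x, r' ≤ r + dist y x := by
    rintro x y r ⟨n, xs, ys, hn, hxs0, hys, rfl⟩
    refine ⟨_, ⟨n, xs, ys, hn, hxs0, hys, rfl⟩, ?_⟩
    have := dist_triangle (xs (n - 1)) y x
    linarith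
  have hshift : ∀ x y : X,
      sInf (gammaChainSet M f S x) ≤ sInf (gammaChainSet M f S y) + dist y x := by
    intro x y
    have h1 : sInf (gammaChainSet M f S x) - dist y x ≤ sInf (gammaChainSet M f S y) := by
      apply le_csInf (hne y)
      intro r hr
      obtain ⟨r', hr', hle⟩ := trans x y r hr
      have := csInf_le (hbdd x) hr'
      linarith
    linarith
  -- extension of a chain at x' by (x, yy) with yy ∈ M x
  have ext : ∀ (x x' yy : X), yy ∈ M x → ∀ r ∈ gammaChainSet M f S x',
      ∃ r' ∈ gammaChainSet M f S x, r' ≤ r + dist x' yy - dist x yy := by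
    rintro x x' yy hyy r ⟨n, xs, ys, hn, hxs0, hys, rfl⟩
    obtain ⟨m, rfl⟩ : ∃ m, n = m + 1 := ⟨n - 1, (Nat.succ_pred_eq_of_pos hn).symm⟩
    refine ⟨_, ⟨m + 2, (fun i => if i ≤ m then xs i else x),
      (fun i => if i ≤ m then ys i else yy), by omega, by simpa using hxs0, ?_, rfl⟩, ?_⟩
    · intro i hi
      by_cases h : i ≤ m
      · simpa [h] using hys i (by omega)
      · have hi1 : i = m + 1 := by omega
        simp [hi1, hyy]
    · have hlast : (if m + 1 ≤ m then xs (m + 1) else x) = x := by simp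
      simp only [Nat.add_sub_cancel]
      have h21 : m + 2 - 1 = m + 1 := rfl
      rw [h21, Finset.sum_range_succ]
      have hcongr : ∑ i ∈ Finset.range m,
          (dist (if i ≤ m then xs i else x) (if i + 1 ≤ m then ys (i + 1) else yy) -
            dist (if i + 1 ≤ m then xs (i + 1) else x) (if i + 1 ≤ m then ys (i + 1) else yy)) =
          ∑ i ∈ Finset.range m,
            (dist (xs i) (ys (i + 1)) - dist (xs (i + 1)) (ys (i + 1))) := by
        apply Finset.sum_congr rfl
        intro i hi
        rw [Finset.mem_range] at hi
        have h1 : i ≤ m := by omega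
        have h2 : i + 1 ≤ m := by omega
        simp [h1, h2]
      have htri : dist (xs m) yy ≤ dist (xs m) x' + dist x' yy := dist_triangle _ _ _
      have hxm : (if m ≤ m then xs m else x) = xs m := by simp
      have hym1 : (if m + 1 ≤ m then ys (m + 1) else yy) = yy := by simp
      have h0 : (if 0 ≤ m then xs 0 else x) = xs 0 := by simp
      rw [hcongr, hlast, hxm, hym1, h0, dist_self]
      linarith
  refine ⟨fun x => ⟨hne x, hbdd x⟩, ⟨?_, ?_, ?_⟩, ?_⟩
  · -- 1-Lipschitz
    intro x y
    rw [abs_sub_le_iff]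
    constructor
    · have := hshift x y; rw [dist_comm y x] at this; linarith
    · have := hshift y x; linarith
  · -- agrees with f on S
    intro s hsS
    obtain ⟨ysx, hysx⟩ := hSdom hsS
    apply le_antisymm
    · exact csInf_le (hbdd s) ⟨1, (fun _ => s), (fun _ => ysx), one_pos, hsS,
        fun i _ => hysx, by simp⟩
    · apply le_csInf (hne s)
      intro r hr
      obtain ⟨z, hz, hzr⟩ := key s r hr
      have h1 : f s - f z ≤ dist z ysx - dist s ysx := hf s ysx hysx z hz
      have h2 : dist z ysx ≤ dist z s + dist s ysx := dist_triangle _ _ _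
      linarith
  · -- subdifferential condition
    intro x yy hyy x'
    have h1 : sInf (gammaChainSet M f S x) - (dist x' yy - dist x yy) ≤
        sInf (gammaChainSet M f S x') := by
      apply le_csInf (hne x')
      intro r hr
      obtain ⟨r', hr', hle⟩ := ext x x' yy hyy r hr
      have := csInf_le (hbdd x) hr'
      linarith
    linarith
  · -- maximality
    rintro h ⟨hLip, hAgree, hSub⟩ x
    apply le_csInf (hne x)
    rintro r ⟨n, xs, ys, hn, hxs0, hys, rfl⟩
    obtain ⟨m, rfl⟩ : ∃ m, n = m + 1 := ⟨n - 1, (Nat.succ_pred_eq_of_pos hn).symm⟩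
    have hterm : ∀ i ∈ Finset.range m,
        h (xs (i + 1)) - h (xs i) ≤
          dist (xs i) (ys (i + 1)) - dist (xs (i + 1)) (ys (i + 1)) := by
      intro i hi
      rw [Finset.mem_range] at hi
      exact hSub (xs (i + 1)) (ys (i + 1)) (hys (i + 1) (by omega)) (xs i)
    have hsum := Finset.sum_le_sum hterm
    rw [Finset.sum_range_sub (fun i => h (xs i))] at hsum
    have hx : h x - h (xs m) ≤ dist (xs m) x := by
      have := hLip x (xs m)
      rw [abs_sub_le_iff] at this
      have := this.1
      rw [dist_comm] at this
      linarith
    have h0 : h (xs 0) = f (xs 0) := hAgree (xs 0) hxs0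
    simp only [Nat.add_sub_cancel]
    linarith
end
end
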